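/- Suppose in addition that the edge weight function h is a metric on S and that 0 < α ≤ 1. Fix an integer constant M ≥ 1 and let J_n = max over integers k with n^M ≤ k < (n+1)^M of |TSP_k − TSP_{n^M}|. Then there is a constant D > 0 such that for all n sufficiently large, E[J_n / n^{M(1−α/2)}] ≤ D/n^{1−α/2} and E[(J_n / n^{M(1−α/2)})²] ≤ D/n^{2−α}. -/

import Mathlib

open MeasureTheory ProbabilityTheory Real Filter

noncomputable section

abbrev EucPlane : Type := EuclideanSpace ℝ (Fin 2)

def unitSq : Set EucPlane := {x | x 0 ∈ Set.Icc (0:ℝ) 1 ∧ x 1 ∈ Set.Icc (0:ℝ) 1}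

/-- Weight of the spanning cycle determined by the cyclic order `σ 0, σ 1, …, σ (n-1)`. -/
noncomputable def cycleWeight (h : EucPlane → EucPlane → ℝ) (α : ℝ) {n : ℕ}
    (X : Fin n → EucPlane) (σ : Equiv.Perm (Fin n)) : ℝ :=
  ∑ i : Fin n, h (X (σ i)) (X (σ (finRotate n i))) ^ α

/-- Minimum weight of a spanning (Hamiltonian) cycle on the nodes `X 0, …, X (n-1)`. -/
noncomputable def tsp (h : EucPlane → EucPlane → ℝ) (α : ℝ) {n : ℕ}
    (X : Fin n → EucPlane) : ℝ :=
  ⨅ σ : Equiv.Perm (Fin n), cycleWeight h α X σ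

/-- `TSP_n`, the TSP weight of the first `n` random nodes. -/
noncomputable def tspRV {Ω : Type} (h : EucPlane → EucPlane → ℝ) (α : ℝ)
    (X : ℕ → Ω → EucPlane) (n : ℕ) (ω : Ω) : ℝ :=
  tsp h α (fun i : Fin n => X i.val ω)

/-- `J_n = max_{n^M ≤ k < (n+1)^M} |TSP_k - TSP_{n^M}|`. -/
noncomputable def Jmax {Ω : Type} (h : EucPlane → EucPlane → ℝ) (α : ℝ)
    (X : ℕ → Ω → EucPlane) (M n : ℕ) (ω : Ω) : ℝ :=
  ⨆ k ∈ Finset.Ico (n ^ M) ((n + 1) ^ M), |tspRV h α X k ω - tspRV h α X (n ^ M) ω|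

lemma rpow_subadd {α : ℝ} (hα0 : 0 ≤ α) (hα1 : α ≤ 1) {a b : ℝ} (ha : 0 ≤ a) (hb : 0 ≤ b) :
    (a + b) ^ α ≤ a ^ α + b ^ α := by
  have key := NNReal.rpow_add_le_add_rpow a.toNNReal b.toNNReal hα0 hα1
  calc (a + b) ^ α = (((a.toNNReal + b.toNNReal : NNReal) : ℝ)) ^ α := by
        rw [← Real.toNNReal_add ha hb, Real.coe_toNNReal _ (by positivity)]
    _ = (((a.toNNReal + b.toNNReal) ^ α : NNReal) : ℝ) := (NNReal.coe_rpow _ _).symm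
    _ ≤ ((a.toNNReal ^ α + b.toNNReal ^ α : NNReal) : ℝ) := by exact_mod_cast key
    _ = a ^ α + b ^ α := by
        push_cast [NNReal.coe_rpow, Real.coe_toNNReal _ ha, Real.coe_toNNReal _ hb]
        ring

section basic
variable (h : EucPlane → EucPlane → ℝ) (α : ℝ) {n : ℕ}

lemma cycleWeight_nonneg {X : Fin n → EucPlane} (hh : ∀ i j, 0 ≤ h (X i) (X j))
    (σ : Equiv.Perm (Fin n)) : 0 ≤ cycleWeight h α X σ :=
  Finset.sum_nonneg fun i _ => Real.rpow_nonneg (hh _ _) _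

lemma tsp_nonneg {X : Fin n → EucPlane} (hh : ∀ i j, 0 ≤ h (X i) (X j)) :
    0 ≤ tsp h α X :=
  le_ciInf fun σ => cycleWeight_nonneg h α hh σ

lemma tsp_le_cycleWeight {X : Fin n → EucPlane}
    (σ : Equiv.Perm (Fin n)) : tsp h α X ≤ cycleWeight h α X σ :=
  ciInf_le (Set.Finite.bddBelow (Set.finite_range _)) σ

lemma le_tsp {X : Fin n → EucPlane} (a : ℝ)
    (hle : ∀ σ : Equiv.Perm (Fin n), a ≤ cycleWeight h α X σ) : a ≤ tsp h α X :=
  le_ciInf hle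

/-- reindexing invariance -/
lemma tsp_comp_perm (X : Fin n → EucPlane) (e : Equiv.Perm (Fin n)) :
    tsp h α (X ∘ e) = tsp h α X := by
  unfold tsp
  apply le_antisymm
  · apply le_ciInf
    intro σ
    have heq : cycleWeight h α (X ∘ e) (σ.trans e.symm) = cycleWeight h α X σ := by
      unfold cycleWeight
      refine Finset.sum_congr rfl fun i _ => ?_
      simp
    calc ⨅ σ' : Equiv.Perm (Fin n), cycleWeight h α (X ∘ e) σ'
        ≤ cycleWeight h α (X ∘ e) (σ.trans e.symm) :=
          ciInf_le (Set.Finite.bddBelow (Set.finite_range _)) _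
      _ = cycleWeight h α X σ := heq
  · apply le_ciInf
    intro σ
    have heq : cycleWeight h α X (σ.trans e) = cycleWeight h α (X ∘ e) σ := by
      unfold cycleWeight
      refine Finset.sum_congr rfl fun i _ => ?_
      simp
    calc ⨅ σ' : Equiv.Perm (Fin n), cycleWeight h α X σ'
        ≤ cycleWeight h α X (σ.trans e) :=
          ciInf_le (Set.Finite.bddBelow (Set.finite_range _)) _
      _ = cycleWeight h α (X ∘ e) σ := heq
end basic


open Fin.NatCast Fin.CommRing in
lemma finRotate_pow_apply {k : ℕ} (t : ℕ) (i : Fin (k+1)) :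
    ((finRotate (k+1)) ^ t) i = i + (t : Fin (k+1)) := by
  induction t generalizing i with
  | zero => simp
  | succ t ih =>
    have : ((finRotate (k+1)) ^ (t+1)) i = ((finRotate (k+1)) ^ t) (finRotate (k+1) i) := by
      rw [pow_succ]
      rfl
    rw [this, finRotate_succ_apply, ih]
    push_cast
    ring

open Fin.NatCast Fin.CommRing in
lemma cycleWeight_rot (h : EucPlane → EucPlane → ℝ) (α : ℝ) {k : ℕ}
    (X : Fin (k+1) → EucPlane) (σ : Equiv.Perm (Fin (k+1))) (t : ℕ) :
    cycleWeight h α X ((((finRotate (k+1)) ^ t) : Equiv.Perm (Fin (k+1))).trans σ)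
      = cycleWeight h α X σ := by
  unfold cycleWeight
  rw [← Equiv.sum_comp ((finRotate (k+1)) ^ t : Equiv.Perm (Fin (k+1)))
    (fun i => h (X (σ i)) (X (σ (finRotate (k+1) i))) ^ α)]
  refine Finset.sum_congr rfl fun i _ => ?_
  simp only [Equiv.trans_apply]
  congr 3
  rw [finRotate_succ_apply, finRotate_pow_apply, finRotate_pow_apply, finRotate_succ_apply]
  ring


section surgery

/-- key sum-splitting inequality behind deletion -/
lemma cycleWeight_delete (h : EucPlane → EucPlane → ℝ) {α : ℝ} (hα0 : 0 < α) (hα1 : α ≤ 1)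
    (hnn : ∀ x ∈ unitSq, ∀ y ∈ unitSq, 0 ≤ h x y)
    (htriangle : ∀ x ∈ unitSq, ∀ y ∈ unitSq, ∀ z ∈ unitSq, h x z ≤ h x y + h y z)
    {k0 : ℕ} (X : Fin (k0+2) → EucPlane) (hsq : ∀ i, X i ∈ unitSq)
    (σ' : Equiv.Perm (Fin (k0+2))) (hfix : σ' (Fin.last (k0+1)) = Fin.last (k0+1)) :
    ∃ τ : Equiv.Perm (Fin (k0+1)),
      cycleWeight h α (X ∘ Fin.castSucc) τ ≤ cycleWeight h α X σ' := by
  -- the deleted-point permutation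
  have hne : ∀ i : Fin (k0+1), σ' i.castSucc ≠ Fin.last (k0+1) := by
    intro i hcon
    have : i.castSucc = Fin.last (k0+1) := σ'.injective (hcon.trans hfix.symm)
    exact absurd this (Fin.castSucc_lt_last i).ne
  have hlt : ∀ i : Fin (k0+1), (σ' i.castSucc : ℕ) < k0+1 := by
    intro i
    have := Fin.val_lt_last (hne i)
    simpa using this
  set g : Fin (k0+1) → Fin (k0+1) := fun i => (σ' i.castSucc).castLT (hlt i) with hg
  have ginj : Function.Injective g := by
    intro a b hab
    have : (σ' a.castSucc) = (σ' b.castSucc) := by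
      have := congrArg Fin.castSucc hab
      simpa [hg, Fin.castSucc_castLT] using this
    exact Fin.castSucc_injective _ (σ'.injective this)
  obtain ⟨gbij⟩ : Nonempty (Function.Bijective g) := ⟨(Finite.injective_iff_bijective).mp ginj⟩
  refine ⟨Equiv.ofBijective g gbij, ?_⟩
  have hτapp : ∀ i, (Equiv.ofBijective g gbij) i = g i := fun i => rfl
  have hgcast : ∀ i : Fin (k0+1), (g i).castSucc = σ' i.castSucc := by
    intro i; simp [hg, Fin.castSucc_castLT]
  -- abbreviation for weights
  set w : Fin (k0+2) → Fin (k0+2) → ℝ := fun a b => h (X a) (X b) ^ α with hw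
  have hwnn : ∀ a b, 0 ≤ w a b := fun a b => Real.rpow_nonneg (hnn _ (hsq a) _ (hsq b)) _
  -- expand the small cycle
  have hsmall : cycleWeight h α (X ∘ Fin.castSucc) (Equiv.ofBijective g gbij)
      = (∑ i0 : Fin k0, w (σ' i0.castSucc.castSucc) (σ' i0.succ.castSucc))
        + w (σ' (Fin.last k0).castSucc) (σ' (0 : Fin (k0+1)).castSucc) := by
    unfold cycleWeight
    rw [Fin.sum_univ_castSucc]
    congr 1
    · refine Finset.sum_congr rfl fun i0 _ => ?_
      simp only [hτapp, Function.comp_apply, finRotate_succ_apply, hw]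
      rw [hgcast, hgcast, Fin.coeSucc_eq_succ]
    · simp only [hτapp, Function.comp_apply, finRotate_succ_apply, hw]
      rw [hgcast, hgcast, Fin.last_add_one]
  -- expand the big cycle
  have hbig : cycleWeight h α X σ'
      = (∑ i0 : Fin k0, w (σ' i0.castSucc.castSucc) (σ' i0.succ.castSucc))
        + (w (σ' (Fin.last k0).castSucc) (Fin.last (k0+1))
          + w (Fin.last (k0+1)) (σ' (0 : Fin (k0+1)).castSucc)) := by
    unfold cycleWeight
    rw [Fin.sum_univ_castSucc]
    rw [Fin.sum_univ_castSucc (n := k0)]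
    rw [add_assoc]
    congr 1
    · refine Finset.sum_congr rfl fun i0 _ => ?_
      simp only [finRotate_succ_apply, hw]
      congr 2
      rw [Fin.coeSucc_eq_succ, Fin.succ_castSucc]
    · congr 1
      · simp only [finRotate_succ_apply, hw]
        congr 2
        · rw [Fin.coeSucc_eq_succ, Fin.succ_last, hfix]
      · simp only [finRotate_succ_apply, hw]
        rw [hfix, Fin.last_add_one]
        simp
  rw [hsmall, hbig]
  have htri : w (σ' (Fin.last k0).castSucc) (σ' (0 : Fin (k0+1)).castSucc)
      ≤ w (σ' (Fin.last k0).castSucc) (Fin.last (k0+1))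
        + w (Fin.last (k0+1)) (σ' (0 : Fin (k0+1)).castSucc) := by
    simp only [hw]
    set a := X (σ' (Fin.last k0).castSucc)
    set p := X (Fin.last (k0+1))
    set b := X (σ' (0 : Fin (k0+1)).castSucc)
    have h1 : h a b ≤ h a p + h p b := htriangle _ (hsq _) _ (hsq _) _ (hsq _)
    have h2 : h a b ^ α ≤ (h a p + h p b) ^ α :=
      Real.rpow_le_rpow (hnn _ (hsq _) _ (hsq _)) h1 hα0.le
    refine h2.trans (rpow_subadd hα0.le hα1 (hnn _ (hsq _) _ (hsq _)) (hnn _ (hsq _) _ (hsq _)))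
  linarith
end surgery


open Fin.NatCast Fin.CommRing in
/-- rotate a permutation so the last position holds a prescribed value -/
lemma exists_rot_fix {k : ℕ} (σ : Equiv.Perm (Fin (k+1))) (q : Fin (k+1)) :
    ∃ t : ℕ, ((((finRotate (k+1)) ^ t) : Equiv.Perm (Fin (k+1))).trans σ) (Fin.last k) = q := by
  refine ⟨(σ.symm q : ℕ) + 1, ?_⟩
  have : ((finRotate (k+1)) ^ ((σ.symm q : ℕ) + 1)) (Fin.last k) = σ.symm q := by
    rw [finRotate_pow_apply]
    have hlast : (Fin.last k : Fin (k+1)) = ((k : ℕ) : Fin (k+1)) := by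
      simp [Fin.ext_iff, Fin.val_natCast, Nat.mod_eq_of_lt]
    rw [hlast]
    rw [Nat.cast_add, Nat.cast_one]
    have hself : ((k : ℕ) : Fin (k+1)) + 1 = 0 := by
      have := Fin.natCast_self (k+1)
      push_cast at this
      linear_combination (norm := ring_nf) this
    calc ((k : ℕ) : Fin (k+1)) + (((σ.symm q : ℕ) : Fin (k+1)) + 1)
        = (((k : ℕ) : Fin (k+1)) + 1) + ((σ.symm q : ℕ) : Fin (k+1)) := by ring
      _ = 0 + ((σ.symm q : ℕ) : Fin (k+1)) := by rw [hself]
      _ = σ.symm q := by rw [zero_add, Fin.cast_val_eq_self]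
  simp only [Equiv.trans_apply, this, Equiv.apply_symm_apply]

lemma tsp_delete (h : EucPlane → EucPlane → ℝ) {α : ℝ} (hα0 : 0 < α) (hα1 : α ≤ 1)
    (hnn : ∀ x ∈ unitSq, ∀ y ∈ unitSq, 0 ≤ h x y)
    (htriangle : ∀ x ∈ unitSq, ∀ y ∈ unitSq, ∀ z ∈ unitSq, h x z ≤ h x y + h y z)
    {k0 : ℕ} (X : Fin (k0+2) → EucPlane) (hsq : ∀ i, X i ∈ unitSq) :
    tsp h α (X ∘ Fin.castSucc) ≤ tsp h α X := by
  apply le_ciInf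
  intro σ
  obtain ⟨t, ht⟩ := exists_rot_fix σ (Fin.last (k0+1))
  obtain ⟨τ, hτ⟩ := cycleWeight_delete h hα0 hα1 hnn htriangle X hsq _ ht
  calc tsp h α (X ∘ Fin.castSucc) ≤ cycleWeight h α (X ∘ Fin.castSucc) τ :=
        tsp_le_cycleWeight h α τ
    _ ≤ cycleWeight h α X ((((finRotate (k0+2)) ^ t) : Equiv.Perm (Fin (k0+2))).trans σ) := hτ
    _ = cycleWeight h α X σ := cycleWeight_rot h α X σ t

lemma tsp_insert (h : EucPlane → EucPlane → ℝ) {α : ℝ} (hα0 : 0 < α) (hα1 : α ≤ 1)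
    (hnn : ∀ x ∈ unitSq, ∀ y ∈ unitSq, 0 ≤ h x y)
    (hsymm : ∀ x y, h x y = h y x)
    (htriangle : ∀ x ∈ unitSq, ∀ y ∈ unitSq, ∀ z ∈ unitSq, h x z ≤ h x y + h y z)
    {k0 : ℕ} (X : Fin (k0+2) → EucPlane) (hsq : ∀ i, X i ∈ unitSq) (q : Fin (k0+1)) :
    tsp h α X ≤ tsp h α (X ∘ Fin.castSucc)
      + 2 * h (X (Fin.last (k0+1))) (X q.castSucc) ^ α := by
  rw [← sub_le_iff_le_add]
  apply le_ciInf
  intro τ0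
  rw [sub_le_iff_le_add]
  obtain ⟨t, ht⟩ := exists_rot_fix τ0 q
  set τ' : Equiv.Perm (Fin (k0+1)) := (((finRotate (k0+1)) ^ t) : Equiv.Perm (Fin (k0+1))).trans τ0 with hτ'
  have hrot : cycleWeight h α (X ∘ Fin.castSucc) τ' = cycleWeight h α (X ∘ Fin.castSucc) τ0 :=
    cycleWeight_rot h α (X ∘ Fin.castSucc) τ0 t
  -- build the big permutation
  set G : Fin (k0+2) → Fin (k0+2) :=
    fun i => Fin.lastCases (Fin.last (k0+1)) (fun i0 => (τ' i0).castSucc) i with hG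
  have hGcast : ∀ i0 : Fin (k0+1), G i0.castSucc = (τ' i0).castSucc := by
    intro i0; simp [hG]
  have hGlast : G (Fin.last (k0+1)) = Fin.last (k0+1) := by simp [hG]
  have Ginj : Function.Injective G := by
    intro a b hab
    induction a using Fin.lastCases with
    | last =>
      induction b using Fin.lastCases with
      | last => rfl
      | cast b0 =>
        rw [hGlast, hGcast] at hab
        exact absurd hab.symm (Fin.castSucc_lt_last (τ' b0)).ne
    | cast a0 =>
      induction b using Fin.lastCases with
      | last =>
        rw [hGlast, hGcast] at hab
        exact absurd hab (Fin.castSucc_lt_last (τ' a0)).ne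
      | cast b0 =>
        rw [hGcast, hGcast] at hab
        have := τ'.injective (Fin.castSucc_injective _ hab)
        rw [this]
  obtain ⟨Gbij⟩ : Nonempty (Function.Bijective G) := ⟨(Finite.injective_iff_bijective).mp Ginj⟩
  set σ : Equiv.Perm (Fin (k0+2)) := Equiv.ofBijective G Gbij with hσ
  have hσapp : ∀ i, σ i = G i := fun i => rfl
  set w : Fin (k0+2) → Fin (k0+2) → ℝ := fun a b => h (X a) (X b) ^ α with hw
  -- expand the big cycle
  have hbig : cycleWeight h α X σ
      = (∑ i0 : Fin k0, w (τ' i0.castSucc).castSucc (τ' i0.succ).castSucc)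
        + (w (τ' (Fin.last k0)).castSucc (Fin.last (k0+1))
          + w (Fin.last (k0+1)) (τ' (0 : Fin (k0+1))).castSucc) := by
    unfold cycleWeight
    rw [Fin.sum_univ_castSucc]
    rw [Fin.sum_univ_castSucc (n := k0)]
    rw [add_assoc]
    congr 1
    · refine Finset.sum_congr rfl fun i0 _ => ?_
      simp only [finRotate_succ_apply, hσapp, hw]
      rw [Fin.coeSucc_eq_succ, Fin.succ_castSucc, hGcast, hGcast]
    · congr 1
      · simp only [finRotate_succ_apply, hσapp, hw]
        rw [Fin.coeSucc_eq_succ, Fin.succ_last, hGcast, hGlast]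
      · simp only [finRotate_succ_apply, hσapp, hw]
        rw [Fin.last_add_one, hGlast]
        have : G (0 : Fin (k0+2)) = (τ' (0 : Fin (k0+1))).castSucc := by
          have h0 : ((0 : Fin (k0+1)).castSucc) = (0 : Fin (k0+2)) := Fin.castSucc_zero
          rw [← h0, hGcast]
        rw [this]
  -- expand the small cycle
  have hsmall : cycleWeight h α (X ∘ Fin.castSucc) τ'
      = (∑ i0 : Fin k0, w (τ' i0.castSucc).castSucc (τ' i0.succ).castSucc)
        + w (τ' (Fin.last k0)).castSucc (τ' (0 : Fin (k0+1))).castSucc := by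
    unfold cycleWeight
    rw [Fin.sum_univ_castSucc (n := k0)]
    congr 1
    · refine Finset.sum_congr rfl fun i0 _ => ?_
      simp only [finRotate_succ_apply, Function.comp_apply, hw]
      rw [Fin.coeSucc_eq_succ]
    · simp only [finRotate_succ_apply, Function.comp_apply, hw]
      rw [Fin.last_add_one]
  have hq : τ' (Fin.last k0) = q := ht
  -- triangle bound
  have hkey : cycleWeight h α X σ ≤ cycleWeight h α (X ∘ Fin.castSucc) τ'
      + 2 * h (X (Fin.last (k0+1))) (X q.castSucc) ^ α := by
    rw [hbig, hsmall, hq]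
    have htri : w (Fin.last (k0+1)) (τ' (0 : Fin (k0+1))).castSucc
        ≤ w (Fin.last (k0+1)) q.castSucc + w q.castSucc (τ' (0 : Fin (k0+1))).castSucc := by
      simp only [hw]
      have h1 : h (X (Fin.last (k0+1))) (X (τ' (0 : Fin (k0+1))).castSucc)
          ≤ h (X (Fin.last (k0+1))) (X q.castSucc)
            + h (X q.castSucc) (X (τ' (0 : Fin (k0+1))).castSucc) :=
        htriangle _ (hsq _) _ (hsq _) _ (hsq _)
      have h2 := Real.rpow_le_rpow (hnn _ (hsq _) _ (hsq _)) h1 hα0.le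
      exact h2.trans (rpow_subadd hα0.le hα1 (hnn _ (hsq _) _ (hsq _)) (hnn _ (hsq _) _ (hsq _)))
    have hsymmw : w q.castSucc (Fin.last (k0+1)) = w (Fin.last (k0+1)) q.castSucc := by
      simp only [hw]; rw [hsymm]
    have hw2 : w (Fin.last (k0+1)) q.castSucc = h (X (Fin.last (k0+1))) (X q.castSucc) ^ α := rfl
    nlinarith [htri, hsymmw, hw2]
  calc tsp h α X ≤ cycleWeight h α X σ := tsp_le_cycleWeight h α σ
    _ ≤ cycleWeight h α (X ∘ Fin.castSucc) τ' + 2 * h (X (Fin.last (k0+1))) (X q.castSucc) ^ α :=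
        hkey
    _ = cycleWeight h α (X ∘ Fin.castSucc) τ0 + 2 * h (X (Fin.last (k0+1))) (X q.castSucc) ^ α :=
        by rw [hrot]


lemma dist_le_l1 (p q : EucPlane) : dist p q ≤ |p 0 - q 0| + |p 1 - q 1| := by
  rw [EuclideanSpace.dist_eq]
  have h2 : ∀ i : Fin 2, dist (p i) (q i) ^ 2 = (p i - q i)^2 := fun i => by
    rw [Real.dist_eq, sq_abs]
  calc Real.sqrt (∑ i : Fin 2, dist (p i) (q i)^2)
      = Real.sqrt ((p 0 - q 0)^2 + (p 1 - q 1)^2) := by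
        rw [Fin.sum_univ_two, h2 0, h2 1]
    _ ≤ Real.sqrt ((|p 0 - q 0| + |p 1 - q 1|)^2) := by
        apply Real.sqrt_le_sqrt
        nlinarith [abs_nonneg (p 0 - q 0), abs_nonneg (p 1 - q 1), sq_abs (p 0 - q 0),
          sq_abs (p 1 - q 1), abs_nonneg (p 0 - q 0), mul_nonneg (abs_nonneg (p 0 - q 0)) (abs_nonneg (p 1 - q 1))]
    _ = |p 0 - q 0| + |p 1 - q 1| := Real.sqrt_sq (by positivity)

section strips
variable (m' : ℕ)

def stripIdx (m' : ℕ) (y : EucPlane) : ℕ := min (⌊y 1 * m'⌋₊) (m' - 1)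

def ukey (m' : ℕ) (y : EucPlane) : ℝ :=
  2 * (stripIdx m' y) + (if stripIdx m' y % 2 = 0 then y 0 else 1 - y 0)

lemma stripIdx_le (y : EucPlane) : stripIdx m' y ≤ m' - 1 := min_le_right _ _

lemma theta_mem {y : EucPlane} (hy : y ∈ unitSq) :
    (if stripIdx m' y % 2 = 0 then y 0 else 1 - y 0) ∈ Set.Icc (0:ℝ) 1 := by
  obtain ⟨⟨h0, h1⟩, _⟩ := hy
  split <;> constructor <;> linarith

lemma strip_band {y : EucPlane} (hm : 1 ≤ m') (hy : y ∈ unitSq) :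
    (stripIdx m' y : ℝ) / m' ≤ y 1 ∧ y 1 ≤ ((stripIdx m' y : ℝ) + 1) / m' := by
  obtain ⟨_, h0, h1⟩ := hy
  have hm' : (0:ℝ) < m' := by exact_mod_cast hm
  constructor
  · rw [div_le_iff₀ hm']
    have hA : ((stripIdx m' y : ℕ) : ℝ) ≤ (⌊y 1 * (m':ℝ)⌋₊ : ℝ) :=
      Nat.cast_le.mpr (min_le_left _ _)
    have hB : ((⌊y 1 * (m':ℝ)⌋₊ : ℕ) : ℝ) ≤ y 1 * m' := Nat.floor_le (by positivity)
    linarith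
  · rw [le_div_iff₀ hm']
    by_cases hc : ⌊y 1 * (m':ℝ)⌋₊ ≤ m' - 1
    · have heq : stripIdx m' y = ⌊y 1 * (m':ℝ)⌋₊ := min_eq_left hc
      rw [heq]
      have := Nat.lt_floor_add_one (y 1 * (m':ℝ))
      push_cast
      push_cast at this
      linarith
    · have heq : stripIdx m' y = m' - 1 := min_eq_right (le_of_not_ge hc)
      rw [heq]
      have hcast : ((m' - 1 : ℕ) : ℝ) + 1 = m' := by
        push_cast [Nat.cast_sub hm]
        ring
      rw [hcast]
      nlinarith

/-- core pairwise estimate -/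
lemma dist_le_ukey {p q : EucPlane} (hm : 1 ≤ m') (hp : p ∈ unitSq) (hq : q ∈ unitSq)
    (hle : ukey m' p ≤ ukey m' q) :
    dist p q ≤ (3/2) * (ukey m' q - ukey m' p) + 3 / (2 * m') := by
  have hm' : (1:ℝ) ≤ m' := by exact_mod_cast hm
  have hm'0 : (0:ℝ) < m' := by linarith
  set gp := stripIdx m' p with hgp
  set gq := stripIdx m' q with hgq
  set θp := (if stripIdx m' p % 2 = 0 then p 0 else 1 - p 0) with hθp
  set θq := (if stripIdx m' q % 2 = 0 then q 0 else 1 - q 0) with hθq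
  have hθpm : θp ∈ Set.Icc (0:ℝ) 1 := theta_mem m' hp
  have hθqm : θq ∈ Set.Icc (0:ℝ) 1 := theta_mem m' hq
  have hup : ukey m' p = 2 * gp + θp := rfl
  have huq : ukey m' q = 2 * gq + θq := rfl
  set Δ := ukey m' q - ukey m' p with hΔ
  have hΔ0 : 0 ≤ Δ := by simp [hΔ]; linarith
  -- strips are ordered
  have hgle : gp ≤ gq := by
    by_contra hcon
    push_neg at hcon
    have : (gq : ℝ) + 1 ≤ (gp : ℝ) := by exact_mod_cast hcon
    have : ukey m' q < ukey m' p := by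
      rw [hup, huq]
      obtain ⟨h1, h2⟩ := hθpm; obtain ⟨h3, h4⟩ := hθqm
      nlinarith
    linarith
  have hgleR : (gp : ℝ) ≤ (gq : ℝ) := by exact_mod_cast hgle
  -- Δ ≥ 2 (gq - gp) - 1
  have hΔg : (gq : ℝ) - gp ≤ (Δ + 1) / 2 := by
    rw [hΔ, hup, huq]
    obtain ⟨h1, h2⟩ := hθpm; obtain ⟨h3, h4⟩ := hθqm
    nlinarith
  -- horizontal
  have hx : |p 0 - q 0| ≤ Δ := by
    rcases eq_or_lt_of_le hgle with heq | hlt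
    · have hgR : (gp : ℝ) = (gq : ℝ) := by exact_mod_cast heq
      have hsame : θq - θp = Δ := by
        rw [hΔ, hup, huq, ← hgR]
        ring
      have habs : |p 0 - q 0| = |θq - θp| := by
        have hpar : stripIdx m' q % 2 = stripIdx m' p % 2 := by
          rw [← hgp, ← hgq, heq]
        rw [hθp, hθq, hpar]
        by_cases hc : stripIdx m' p % 2 = 0
        · rw [if_pos hc, if_pos hc, abs_sub_comm]
        · rw [if_neg hc, if_neg hc]
          congr 1
          ring
      rw [habs, hsame, abs_of_nonneg hΔ0]
    · have h2 : (gp : ℝ) + 1 ≤ (gq : ℝ) := by exact_mod_cast hlt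
      have hΔ1 : 1 ≤ Δ := by
        rw [hΔ, hup, huq]
        obtain ⟨h1', h2'⟩ := hθpm; obtain ⟨h3, h4⟩ := hθqm
        nlinarith
      obtain ⟨⟨ha, hb⟩, _⟩ := hp
      obtain ⟨⟨hc, hd⟩, _⟩ := hq
      rw [abs_le]
      constructor <;> linarith
  -- vertical
  have hy : |p 1 - q 1| ≤ ((gq : ℝ) - gp + 1) / m' := by
    obtain ⟨hb1, hb2⟩ := strip_band m' hm hp
    obtain ⟨hb3, hb4⟩ := strip_band m' hm hq
    rw [abs_le]
    constructor
    · rw [neg_le, neg_sub]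
      calc q 1 - p 1 ≤ ((gq:ℝ)+1)/m' - (gp:ℝ)/m' := by linarith
        _ = ((gq : ℝ) - gp + 1) / m' := by ring
    · calc p 1 - q 1 ≤ ((gp:ℝ)+1)/m' - (gq:ℝ)/m' := by linarith
        _ = ((gp:ℝ) + 1 - gq) / m' := by ring
        _ ≤ ((gq : ℝ) - gp + 1) / m' := by
            apply div_le_div_of_nonneg_right ?_ hm'0.le
            linarith
  -- combine
  have h1 : |p 1 - q 1| ≤ ((Δ+1)/2 + 1)/m' := by
    refine hy.trans ?_
    apply div_le_div_of_nonneg_right ?_ hm'0.le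
    linarith
  have h3 : ((Δ+1)/2 + 1)/m' = Δ/(2*m') + 3/(2*m') := by
    field_simp
    ring
  have h4 : Δ/(2*m') ≤ Δ/2 := div_le_div_of_nonneg_left hΔ0 two_pos (by linarith)
  calc dist p q ≤ |p 0 - q 0| + |p 1 - q 1| := dist_le_l1 p q
    _ ≤ Δ + (Δ/(2*m') + 3/(2*m')) := by rw [← h3]; linarith
    _ ≤ (3/2) * Δ + 3/(2*m') := by linarith

lemma ukey_nonneg {y : EucPlane} (hy : y ∈ unitSq) : 0 ≤ ukey m' y := by
  have := theta_mem m' hy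
  unfold ukey
  have : (0:ℝ) ≤ (stripIdx m' y : ℝ) := by positivity
  obtain ⟨h1, h2⟩ := theta_mem m' hy
  linarith

lemma ukey_le {y : EucPlane} (hm : 1 ≤ m') (hy : y ∈ unitSq) : ukey m' y ≤ 2 * m' - 1 := by
  obtain ⟨h1, h2⟩ := theta_mem m' hy
  unfold ukey
  have hg : (stripIdx m' y : ℝ) ≤ (m' : ℝ) - 1 := by
    have h3 : stripIdx m' y ≤ m' - 1 := stripIdx_le m' y
    have h4 : ((m' - 1 : ℕ) : ℝ) = (m' : ℝ) - 1 := by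
      push_cast [Nat.cast_sub hm]
      ring
    calc (stripIdx m' y : ℝ) ≤ ((m' - 1 : ℕ) : ℝ) := by exact_mod_cast h3
      _ = (m' : ℝ) - 1 := h4
  linarith

end strips

theorem strip_path (r0 : ℕ) (W : ℕ → EucPlane) (hsq : ∀ j, W j ∈ unitSq) :
    ∃ e : Equiv.Perm (Fin (r0+1)), ∀ Z : ℕ → EucPlane,
      (∀ t (ht : t < r0+1), Z t = W (e ⟨t, ht⟩)) →
      ∑ t ∈ Finset.range r0, dist (Z t) (Z (t+1)) ≤ 5 * (Real.sqrt (r0+1) + 1) := by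
  set r := r0 + 1 with hr
  set m' := Nat.sqrt r + 1 with hm'def
  have hm : 1 ≤ m' := Nat.le_add_left 1 _
  have hm'R : (1:ℝ) ≤ (m' : ℝ) := by exact_mod_cast hm
  have hm'0 : (0:ℝ) < (m' : ℝ) := by linarith
  set keyf : Fin r → ℝ := fun i => ukey m' (W i.val) with hkeyf
  refine ⟨Tuple.sort keyf, ?_⟩
  intro Z hZ
  have htone : Monotone (keyf ∘ Tuple.sort keyf) := Tuple.monotone_sort keyf
  set v : ℕ → ℝ := fun t => if ht : t < r then ukey m' (Z t) else 0 with hv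
  have hZsq : ∀ t, t < r → Z t ∈ unitSq := by
    intro t ht
    rw [hZ t ht]
    exact hsq _
  have hvmono : ∀ t, t + 1 < r → v t ≤ v (t+1) := by
    intro t ht
    have ht' : t < r := by omega
    have h1 : v t = keyf (Tuple.sort keyf ⟨t, ht'⟩) := by
      simp only [hv, dif_pos ht', hkeyf]
      rw [hZ t ht']
    have h2 : v (t+1) = keyf (Tuple.sort keyf ⟨t+1, ht⟩) := by
      simp only [hv, dif_pos ht, hkeyf]
      rw [hZ (t+1) ht]
    rw [h1, h2]
    exact htone (by simp [Fin.le_def])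
  have hpair : ∀ t ∈ Finset.range r0, dist (Z t) (Z (t+1))
      ≤ (3/2) * (v (t+1) - v t) + 3/(2*(m':ℝ)) := by
    intro t hht
    have ht : t + 1 < r := by
      simp only [Finset.mem_range] at hht
      omega
    have ht' : t < r := by omega
    have h1 : v t = ukey m' (Z t) := dif_pos ht'
    have h2 : v (t+1) = ukey m' (Z (t+1)) := dif_pos ht
    have hle : ukey m' (Z t) ≤ ukey m' (Z (t+1)) := by
      have := hvmono t ht
      rwa [h1, h2] at this
    have := dist_le_ukey m' hm (hZsq t ht') (hZsq (t+1) ht) hle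
    rw [h1, h2]
    linarith
  calc ∑ t ∈ Finset.range r0, dist (Z t) (Z (t+1))
      ≤ ∑ t ∈ Finset.range r0, ((3/2) * (v (t+1) - v t) + 3/(2*(m':ℝ))) :=
        Finset.sum_le_sum hpair
    _ = (3/2) * (v r0 - v 0) + r0 * (3/(2*(m':ℝ))) := by
        rw [Finset.sum_add_distrib, ← Finset.mul_sum, Finset.sum_range_sub (fun t => v t),
          Finset.sum_const, Finset.card_range]
        simp [nsmul_eq_mul]
    _ ≤ 5 * (Real.sqrt (r0+1) + 1) := by
        have hb1 : v r0 ≤ 2 * (m' : ℝ) - 1 := by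
          have hlt : r0 < r := by omega
          rw [hv]
          simp only [dif_pos hlt]
          exact ukey_le m' hm (hZsq r0 hlt)
        have hb2 : 0 ≤ v 0 := by
          have hlt : 0 < r := by omega
          rw [hv]
          simp only [dif_pos hlt]
          exact ukey_nonneg m' (hZsq 0 hlt)
        have hb3 : (r0 : ℝ) * (3/(2*(m':ℝ))) ≤ (3/2) * (m' : ℝ) := by
          have h5 : r ≤ m' * m' := by
            have := (Nat.lt_succ_sqrt r).le
            simpa [hm'def, Nat.succ_eq_add_one] using this
          have hrm : (r : ℝ) ≤ (m' : ℝ)^2 := by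
            calc (r:ℝ) ≤ ((m' * m' : ℕ) : ℝ) := by exact_mod_cast h5
              _ = (m':ℝ)^2 := by push_cast; ring
          have hr0 : (r0 : ℝ) ≤ (r : ℝ) := by
            rw [hr]; push_cast; linarith
          have h6 : (0:ℝ) ≤ 3/(2*(m':ℝ)) := by positivity
          have h7 : (r0 : ℝ) * (3/(2*(m':ℝ))) ≤ (m':ℝ)^2 * (3/(2*(m':ℝ))) :=
            mul_le_mul_of_nonneg_right (hr0.trans hrm) h6
          have h8 : (m':ℝ)^2 * (3/(2*(m':ℝ))) = (3/2) * (m' : ℝ) := by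
            field_simp
          linarith
        have hcast : ((r:ℕ):ℝ) = (r0:ℝ)+1 := by rw [hr]; push_cast; ring
        have hmsq : (m' : ℝ) ≤ Real.sqrt ((r0:ℝ)+1) + 1 := by
          have hns : (Nat.sqrt r : ℝ) ≤ Real.sqrt r := by
            have h9 : ((Nat.sqrt r : ℝ))^2 ≤ (r : ℝ) := by
              have := Nat.sqrt_le r
              calc ((Nat.sqrt r : ℝ))^2 = ((Nat.sqrt r * Nat.sqrt r : ℕ) : ℝ) := by
                    push_cast; ring
                _ ≤ (r : ℝ) := by exact_mod_cast this
            calc (Nat.sqrt r : ℝ) = Real.sqrt (((Nat.sqrt r : ℝ))^2) :=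
                  (Real.sqrt_sq (by positivity)).symm
              _ ≤ Real.sqrt r := Real.sqrt_le_sqrt h9
          rw [hcast] at hns
          rw [hm'def]
          push_cast
          linarith
        have hs0 : 0 ≤ Real.sqrt ((r0:ℝ)+1) := Real.sqrt_nonneg _
        linarith


/-- Hölder / power-mean inequality -/
lemma sum_rpow_le_card_rpow {ι : Type*} (s : Finset ι) (a : ι → ℝ)
    (ha : ∀ i ∈ s, 0 ≤ a i) {α : ℝ} (hα0 : 0 < α) (hα1 : α ≤ 1) :
    ∑ i ∈ s, a i ^ α ≤ (s.card : ℝ) ^ (1 - α) * (∑ i ∈ s, a i) ^ α := by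
  rcases s.eq_empty_or_nonempty with rfl | hne
  · simp
    positivity
  have hN0 : (0:ℝ) < s.card := by exact_mod_cast Finset.card_pos.mpr hne
  set N : ℝ := (s.card : ℝ) with hN
  have hp : (1:ℝ) ≤ 1/α := by
    rw [le_div_iff₀ hα0]; linarith
  have key := Real.arith_mean_le_rpow_mean s (fun _ => 1/N) (fun i => a i ^ α)
    (fun i _ => by positivity) (by
      rw [Finset.sum_const, nsmul_eq_mul]
      field_simp
      exact hN.symm)
    (fun i hi => Real.rpow_nonneg (ha i hi) _) hp
  have hsimp : ∀ i ∈ s, (a i ^ α) ^ (1/α) = a i := by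
    intro i hi
    rw [← Real.rpow_mul (ha i hi), mul_one_div_cancel hα0.ne', Real.rpow_one]
  rw [one_div_one_div] at key
  have key2 : ∑ i ∈ s, (1/N) * (a i ^ α) ≤ (∑ i ∈ s, (1/N) * a i) ^ α := by
    refine key.trans_eq ?_
    congr 1
    refine Finset.sum_congr rfl fun i hi => ?_
    rw [hsimp i hi]
  have e1 : ∑ i ∈ s, (1/N) * (a i ^ α) = (1/N) * ∑ i ∈ s, a i ^ α := by
    rw [Finset.mul_sum]
  have e2 : ∑ i ∈ s, (1/N) * a i = (∑ i ∈ s, a i) / N := by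
    rw [← Finset.mul_sum, one_div_mul_eq_div]
  have hsum0 : 0 ≤ ∑ i ∈ s, a i := Finset.sum_nonneg ha
  rw [e1, e2] at key2
  have key3 : ∑ i ∈ s, a i ^ α ≤ N * (((∑ i ∈ s, a i)) / N) ^ α := by
    have h4 := mul_le_mul_of_nonneg_left key2 hN0.le
    have h5 : N * (1/N * ∑ i ∈ s, a i ^ α) = ∑ i ∈ s, a i ^ α := by
      field_simp
    rwa [h5] at h4
  refine key3.trans_eq ?_
  rw [Real.div_rpow hsum0 hN0.le, Real.rpow_sub hN0, Real.rpow_one]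
  ring

noncomputable def tspN (h : EucPlane → EucPlane → ℝ) (α : ℝ) (X : ℕ → EucPlane) (m : ℕ) : ℝ :=
  tsp h α (fun i : Fin m => X i.val)

section tspNlem
variable (h : EucPlane → EucPlane → ℝ) {α : ℝ}

lemma tspN_mono (hα0 : 0 < α) (hα1 : α ≤ 1)
    (hnn : ∀ x ∈ unitSq, ∀ y ∈ unitSq, 0 ≤ h x y)
    (htriangle : ∀ x ∈ unitSq, ∀ y ∈ unitSq, ∀ z ∈ unitSq, h x z ≤ h x y + h y z)
    (X : ℕ → EucPlane) (hsq : ∀ j, X j ∈ unitSq) {m k : ℕ} (hm : 1 ≤ m) (hmk : m ≤ k) :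
    tspN h α X m ≤ tspN h α X k := by
  induction k with
  | zero => omega
  | succ k ih =>
    rcases Nat.lt_or_ge m (k+1) with hlt | hge
    · have hk : m ≤ k := by omega
      have hk1 : 1 ≤ k := by omega
      obtain ⟨k0, rfl⟩ : ∃ k0, k = k0 + 1 := ⟨k - 1, by omega⟩
      refine (ih hk).trans ?_
      have := tsp_delete h hα0 hα1 hnn htriangle
        (fun i : Fin (k0+2) => X i.val) (fun i => hsq _)
      have heq : ((fun i : Fin (k0+2) => X i.val) ∘ Fin.castSucc)
          = (fun i : Fin (k0+1) => X i.val) := by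
        funext i
        simp [Fin.coe_castSucc]
      unfold tspN
      rw [← heq]
      exact this
    · have : m = k + 1 := by omega
      rw [this]

lemma tspN_insert_nat (hα0 : 0 < α) (hα1 : α ≤ 1)
    (hnn : ∀ x ∈ unitSq, ∀ y ∈ unitSq, 0 ≤ h x y)
    (hsymm : ∀ x y, h x y = h y x)
    (htriangle : ∀ x ∈ unitSq, ∀ y ∈ unitSq, ∀ z ∈ unitSq, h x z ≤ h x y + h y z)
    (X : ℕ → EucPlane) (hsq : ∀ j, X j ∈ unitSq) {m a : ℕ} (hm : 1 ≤ m) (ha : a < m) :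
    tspN h α X (m+1) ≤ tspN h α X m + 2 * h (X m) (X a) ^ α := by
  obtain ⟨k0, rfl⟩ : ∃ k0, m = k0 + 1 := ⟨m - 1, by omega⟩
  have := tsp_insert h hα0 hα1 hnn hsymm htriangle
    (fun i : Fin (k0+2) => X i.val) (fun i => hsq _) ⟨a, ha⟩
  have heq : ((fun i : Fin (k0+2) => X i.val) ∘ Fin.castSucc)
      = (fun i : Fin (k0+1) => X i.val) := by
    funext i
    simp [Fin.coe_castSucc]
  rw [heq] at this
  unfold tspN
  convert this using 4 <;> simp [Fin.last]

lemma tspN_chain (hα0 : 0 < α) (hα1 : α ≤ 1)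
    (hnn : ∀ x ∈ unitSq, ∀ y ∈ unitSq, 0 ≤ h x y)
    (hsymm : ∀ x y, h x y = h y x)
    (htriangle : ∀ x ∈ unitSq, ∀ y ∈ unitSq, ∀ z ∈ unitSq, h x z ≤ h x y + h y z)
    (X : ℕ → EucPlane) (hsq : ∀ j, X j ∈ unitSq) {m : ℕ} (hm : 1 ≤ m) (r : ℕ) :
    tspN h α X (m+r) ≤ tspN h α X m
      + 2 * ∑ t ∈ Finset.range r, h (X (m+t)) (X (if t = 0 then 0 else m+t-1)) ^ α := by
  induction r with
  | zero => simp
  | succ r ih =>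
    have hstep := tspN_insert_nat h hα0 hα1 hnn hsymm htriangle X hsq
      (m := m + r) (a := if r = 0 then 0 else m+r-1) (by omega) (by split <;> omega)
    rw [Finset.sum_range_succ]
    have : m + (r+1) = (m + r) + 1 := by omega
    rw [this]
    calc tspN h α X ((m+r)+1)
        ≤ tspN h α X (m+r) + 2 * h (X (m+r)) (X (if r = 0 then 0 else m+r-1)) ^ α := hstep
      _ ≤ tspN h α X m
          + 2 * ∑ t ∈ Finset.range r, h (X (m+t)) (X (if t = 0 then 0 else m+t-1)) ^ α
          + 2 * h (X (m+r)) (X (if r = 0 then 0 else m+r-1)) ^ α := by linarith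
      _ = _ := by ring
end tspNlem

lemma unitSq_diam {p q : EucPlane} (hp : p ∈ unitSq) (hq : q ∈ unitSq) : dist p q ≤ 2 := by
  obtain ⟨⟨a1, a2⟩, a3, a4⟩ := hp
  obtain ⟨⟨b1, b2⟩, b3, b4⟩ := hq
  refine (dist_le_l1 p q).trans ?_
  have h1 : |p 0 - q 0| ≤ 1 := by rw [abs_le]; constructor <;> linarith
  have h2 : |p 1 - q 1| ≤ 1 := by rw [abs_le]; constructor <;> linarith
  linarith

lemma main_upper (h : EucPlane → EucPlane → ℝ) {α : ℝ} (hα0 : 0 < α) (hα1 : α ≤ 1)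
    (hnn : ∀ x ∈ unitSq, ∀ y ∈ unitSq, 0 ≤ h x y)
    (hsymm : ∀ x y, h x y = h y x)
    (htriangle : ∀ x ∈ unitSq, ∀ y ∈ unitSq, ∀ z ∈ unitSq, h x z ≤ h x y + h y z)
    {c2 : ℝ} (hc2 : 0 < c2)
    (hbound2 : ∀ x ∈ unitSq, ∀ y ∈ unitSq, h x y ≤ c2 * dist x y)
    (X : ℕ → EucPlane) (hsq : ∀ j, X j ∈ unitSq) {m k : ℕ} (hm : 1 ≤ m) (hmk : m ≤ k) :
    tspN h α X k ≤ tspN h α X m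
      + (2 * c2 ^ α * 12 ^ α) * (((k - m : ℕ) : ℝ)) ^ (1 - α/2) := by
  set r := k - m with hrdef
  have hk : k = m + r := by omega
  rcases Nat.eq_zero_or_pos r with hr0 | hrpos
  · have hkm2 : k = m := by omega
    rw [hkm2, hr0]
    simp only [Nat.cast_zero, Real.zero_rpow (show (1:ℝ) - α/2 ≠ 0 by linarith),
      mul_zero, add_zero, le_refl]
  obtain ⟨r0, hr⟩ : ∃ r0, r = r0 + 1 := ⟨r - 1, by omega⟩
  obtain ⟨e, he⟩ := strip_path r0 (fun t => X (m + t)) (fun j => hsq _)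
  set E : Equiv.Perm (Fin (m + (r0+1))) :=
    finSumFinEquiv.symm.trans ((Equiv.sumCongr (Equiv.refl (Fin m)) e).trans finSumFinEquiv)
    with hE
  set X' : ℕ → EucPlane :=
    fun j => if hj : j < m + (r0+1) then X ((E ⟨j, hj⟩ : Fin (m + (r0+1))) : ℕ) else X j
    with hX'
  have hsq' : ∀ j, X' j ∈ unitSq := by
    intro j
    simp only [hX']
    split <;> exact hsq _
  have F1 : ∀ j, j < m → X' j = X j := by
    intro j hj
    have hj2 : j < m + (r0+1) := by omega
    have hEj : E ⟨j, hj2⟩ = ⟨j, hj2⟩ := by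
      have hcast : (⟨j, hj2⟩ : Fin (m + (r0+1))) = Fin.castAdd (r0+1) ⟨j, hj⟩ := by
        apply Fin.ext; rfl
      rw [hE, hcast]
      simp only [Equiv.trans_apply, finSumFinEquiv_symm_apply_castAdd,
        Equiv.sumCongr_apply, Sum.map_inl, id_eq, Equiv.refl_apply, finSumFinEquiv_apply_left]
    rw [hX']
    simp only [dif_pos hj2, hEj]
  have F2 : ∀ t (ht : t < r0+1), X' (m+t) = X (m + ((e ⟨t, ht⟩ : Fin (r0+1)) : ℕ)) := by
    intro t ht
    have hj2 : m + t < m + (r0+1) := by omega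
    have hcast : (⟨m+t, hj2⟩ : Fin (m + (r0+1))) = Fin.natAdd m ⟨t, ht⟩ := by
      apply Fin.ext; rfl
    have hEj : ((E ⟨m+t, hj2⟩ : Fin (m + (r0+1))) : ℕ) = m + ((e ⟨t, ht⟩ : Fin (r0+1)) : ℕ) := by
      rw [hE, hcast]
      simp only [Equiv.trans_apply, finSumFinEquiv_symm_apply_natAdd,
        Equiv.sumCongr_apply, Sum.map_inr, finSumFinEquiv_apply_right]
      rfl
    rw [hX']
    simp only [dif_pos hj2, hEj]
  have F3 : tspN h α X' (m+(r0+1)) = tspN h α X (m+(r0+1)) := by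
    unfold tspN
    have : (fun i : Fin (m+(r0+1)) => X' i.val)
        = (fun i : Fin (m+(r0+1)) => X i.val) ∘ E := by
      funext i
      simp only [hX', Function.comp_apply, dif_pos i.isLt, Fin.eta]
    rw [this, tsp_comp_perm]
  have F5 : tspN h α X' m = tspN h α X m := by
    unfold tspN
    congr 1
    funext i
    exact F1 i.val i.isLt
  have chain := tspN_chain h hα0 hα1 hnn hsymm htriangle X' hsq' hm (r0+1)
  rw [F3, F5] at chain
  -- bound the sum
  set S := ∑ t ∈ Finset.range (r0+1),
    h (X' (m+t)) (X' (if t = 0 then 0 else m+t-1)) ^ α with hS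
  set dfun : ℕ → ℝ := fun t => dist (X' (m+t)) (X' (if t = 0 then 0 else m+t-1)) with hd
  have hterm : ∀ t ∈ Finset.range (r0+1),
      h (X' (m+t)) (X' (if t = 0 then 0 else m+t-1)) ^ α ≤ c2 ^ α * dfun t ^ α := by
    intro t _
    rw [← Real.mul_rpow hc2.le dist_nonneg]
    exact Real.rpow_le_rpow (hnn _ (hsq' _) _ (hsq' _))
      (hbound2 _ (hsq' _) _ (hsq' _)) hα0.le
  have hS1 : S ≤ c2 ^ α * ∑ t ∈ Finset.range (r0+1), dfun t ^ α := by
    rw [hS, Finset.mul_sum]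
    exact Finset.sum_le_sum fun t ht => (hterm t ht).trans (le_of_eq rfl)
  have hH : ∑ t ∈ Finset.range (r0+1), dfun t ^ α
      ≤ ((r0+1 : ℕ) : ℝ) ^ (1 - α) * (∑ t ∈ Finset.range (r0+1), dfun t) ^ α := by
    have := sum_rpow_le_card_rpow (Finset.range (r0+1)) dfun
      (fun t _ => dist_nonneg) hα0 hα1
    simpa using this
  -- total length
  have hlen : ∑ t ∈ Finset.range (r0+1), dfun t ≤ 12 * Real.sqrt ((r0:ℝ)+1) := by
    have hsqrt1 : 1 ≤ Real.sqrt ((r0:ℝ)+1) := by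
      have h1 : (1:ℝ) ≤ (r0:ℝ)+1 := by linarith [Nat.cast_nonneg (α := ℝ) r0]
      calc (1:ℝ) = Real.sqrt 1 := Real.sqrt_one.symm
        _ ≤ Real.sqrt ((r0:ℝ)+1) := Real.sqrt_le_sqrt h1
    have hzero : dfun 0 ≤ 2 := by
      rw [hd]
      exact unitSq_diam (hsq' _) (hsq' _)
    have hrest : ∑ i ∈ Finset.range r0, dfun (i+1) ≤ 5 * (Real.sqrt ((r0:ℝ)+1) + 1) := by
      have hZ := he (fun t => X' (m + t)) (fun t ht => F2 t ht)
      have : ∑ i ∈ Finset.range r0, dfun (i+1)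
          = ∑ i ∈ Finset.range r0, dist (X' (m+i)) (X' (m+(i+1))) := by
        refine Finset.sum_congr rfl fun i _ => ?_
        rw [hd]
        simp only [Nat.add_sub_cancel]
        have hne0 : i + 1 ≠ 0 := Nat.succ_ne_zero i
        rw [if_neg hne0]
        have harg : m + (i+1) - 1 = m + i := by omega
        rw [harg, dist_comm]
      rw [this]
      exact hZ
    have hsplit : ∑ t ∈ Finset.range (r0+1), dfun t
        = ∑ i ∈ Finset.range r0, dfun (i+1) + dfun 0 := Finset.sum_range_succ' dfun r0
    rw [hsplit]
    nlinarith [hsqrt1]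
  -- put together
  have hR0 : (0:ℝ) < (r0:ℝ) + 1 := by positivity
  have hfinal : ∑ t ∈ Finset.range (r0+1), dfun t ^ α
      ≤ 12 ^ α * ((r0:ℝ)+1) ^ (1 - α/2) := by
    have h1 : (∑ t ∈ Finset.range (r0+1), dfun t) ^ α
        ≤ (12 * Real.sqrt ((r0:ℝ)+1)) ^ α :=
      Real.rpow_le_rpow (Finset.sum_nonneg fun t _ => dist_nonneg) hlen hα0.le
    have h2 : (12 * Real.sqrt ((r0:ℝ)+1)) ^ α
        = 12 ^ α * (((r0:ℝ)+1) ^ ((1:ℝ)/2)) ^ α := by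
      rw [Real.mul_rpow (by norm_num) (Real.sqrt_nonneg _), Real.sqrt_eq_rpow]
    have h3 : (((r0:ℝ)+1) ^ ((1:ℝ)/2)) ^ α = ((r0:ℝ)+1) ^ (α/2) := by
      rw [← Real.rpow_mul hR0.le]
      norm_num
      ring_nf
    have h4 : ((r0+1:ℕ):ℝ) ^ (1 - α) * (((r0:ℝ)+1) ^ (α/2)) = ((r0:ℝ)+1) ^ (1 - α/2) := by
      push_cast
      rw [← Real.rpow_add hR0]
      ring_nf
    calc ∑ t ∈ Finset.range (r0+1), dfun t ^ α
        ≤ ((r0+1 : ℕ) : ℝ) ^ (1 - α) * (∑ t ∈ Finset.range (r0+1), dfun t) ^ α := hH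
      _ ≤ ((r0+1 : ℕ) : ℝ) ^ (1 - α) * (12 * Real.sqrt ((r0:ℝ)+1)) ^ α := by
          apply mul_le_mul_of_nonneg_left h1
          positivity
      _ = ((r0+1 : ℕ) : ℝ) ^ (1 - α) * (12 ^ α * (((r0:ℝ)+1) ^ (α/2))) := by
          rw [h2, h3]
      _ = 12 ^ α * (((r0+1:ℕ):ℝ) ^ (1 - α) * (((r0:ℝ)+1) ^ (α/2))) := by ring
      _ = 12 ^ α * ((r0:ℝ)+1) ^ (1 - α/2) := by rw [h4]
  have hcast2 : (((k - m : ℕ)) : ℝ) = (r0:ℝ) + 1 := by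
    rw [← hrdef, hr]
    push_cast
    ring
  rw [hcast2, hk, hr]
  have hc2a : (0:ℝ) ≤ c2 ^ α := Real.rpow_nonneg hc2.le _
  calc tspN h α X (m + (r0+1)) ≤ tspN h α X m + 2 * S := chain
    _ ≤ tspN h α X m + 2 * (c2 ^ α * (12 ^ α * ((r0:ℝ)+1) ^ (1 - α/2))) := by
        have := hS1.trans (mul_le_mul_of_nonneg_left hfinal hc2a)
        linarith
    _ = tspN h α X m + 2 * c2 ^ α * 12 ^ α * ((r0:ℝ)+1) ^ (1 - α/2) := by ring


lemma unitSq_measurable : MeasurableSet unitSq := by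
  have h0 : Measurable fun x : EucPlane => x 0 := by fun_prop
  have h1 : Measurable fun x : EucPlane => x 1 := by fun_prop
  exact (h0 measurableSet_Icc).inter (h1 measurableSet_Icc)

lemma integral_le_of_ae_bound {Ω : Type} [MeasurableSpace Ω] (P : Measure Ω)
    [IsProbabilityMeasure P] (g : Ω → ℝ) (B : ℝ) (hB : 0 ≤ B)
    (hg : ∀ᵐ ω ∂P, 0 ≤ g ω ∧ g ω ≤ B) : ∫ ω, g ω ∂P ≤ B := by
  by_cases hint : Integrable g P
  · have h2 : ∫ ω, g ω ∂P ≤ ∫ _ω, B ∂P :=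
      integral_mono_ae hint (integrable_const B) (hg.mono fun ω hω => hω.2)
    simpa [integral_const, measure_univ] using h2
  · rw [integral_undef hint]
    exact hB

lemma ae_mem_unitSq {Ω : Type} [MeasurableSpace Ω] (P : Measure Ω) [IsProbabilityMeasure P]
    (f : EucPlane → ℝ) (X : ℕ → Ω → EucPlane) (hXmeas : ∀ i, Measurable (X i))
    (hlaw : ∀ i, Measure.map (X i) P
      = (volume.restrict unitSq).withDensity (fun x => ENNReal.ofReal (f x))) :
    ∀ᵐ ω ∂P, ∀ i : ℕ, X i ω ∈ unitSq := by
  rw [ae_all_iff]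
  intro i
  have hU := unitSq_measurable
  have hmap : Measure.map (X i) P unitSqᶜ = 0 := by
    rw [hlaw i, withDensity_apply _ hU.compl]
    apply setLIntegral_measure_zero
    rw [Measure.restrict_apply hU.compl]
    simp
  have : P (X i ⁻¹' unitSqᶜ) = 0 := by
    rw [← Measure.map_apply (hXmeas i) hU.compl]
    exact hmap
  rw [ae_iff]
  exact this

/-- ℕ power gap bound -/
lemma pow_succ_le (n M : ℕ) : (n+1)^(M+1) ≤ n^(M+1) + (M+1)*(n+1)^M := by
  induction M with
  | zero => simp
  | succ M ih =>
    calc (n+1)^(M+2) = (n+1)^(M+1) * (n+1) := by ring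
      _ ≤ (n^(M+1) + (M+1)*(n+1)^M) * (n+1) := Nat.mul_le_mul_right _ ih
      _ = n^(M+2) + n^(M+1) + (M+1)*(n+1)^(M+1) := by ring
      _ ≤ n^(M+2) + (n+1)^(M+1) + (M+1)*(n+1)^(M+1) := by
          have h4 : n^(M+1) ≤ (n+1)^(M+1) := Nat.pow_le_pow_left (by omega) _
          omega
      _ = n^(M+2) + (M+2)*(n+1)^(M+1) := by ring

lemma pow_gap_le (M0 n : ℕ) (hn : 1 ≤ n) :
    (n+1)^(M0+1) - n^(M0+1) ≤ (M0+1) * (2^M0 * n^M0) := by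
  have h1 := pow_succ_le n M0
  have h2 : (n+1)^M0 ≤ 2^M0 * n^M0 := by
    calc (n+1)^M0 ≤ (2*n)^M0 := Nat.pow_le_pow_left (by omega) _
      _ = 2^M0 * n^M0 := by rw [mul_pow]
  have h3 : (M0+1)*(n+1)^M0 ≤ (M0+1)*(2^M0 * n^M0) := Nat.mul_le_mul_left _ h2
  omega


/-- Moment bounds for the block fluctuation `J_n` when `h` is a metric and `0 < α ≤ 1`. -/
theorem tsp_block_fluctuation_bounds_metric
    {Ω : Type} [MeasurableSpace Ω] (P : Measure Ω) [IsProbabilityMeasure P]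
    (f : EucPlane → ℝ) (ε1 ε2 : ℝ) (hε1 : 0 < ε1) (hε12 : ε1 ≤ ε2)
    (hf : ∀ x ∈ unitSq, ε1 ≤ f x ∧ f x ≤ ε2)
    (X : ℕ → Ω → EucPlane) (hXmeas : ∀ i, Measurable (X i))
    (hindep : iIndepFun X P)
    (hlaw : ∀ i, Measure.map (X i) P
      = (volume.restrict unitSq).withDensity (fun x => ENNReal.ofReal (f x)))
    (h : EucPlane → EucPlane → ℝ) (c1 c2 : ℝ) (hc1 : 0 < c1) (hc12 : c1 ≤ c2)
    (hsymm : ∀ x y, h x y = h y x)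
    (hbound : ∀ x ∈ unitSq, ∀ y ∈ unitSq, c1 * dist x y ≤ h x y ∧ h x y ≤ c2 * dist x y)
    (htriangle : ∀ x ∈ unitSq, ∀ y ∈ unitSq, ∀ z ∈ unitSq, h x z ≤ h x y + h y z)
    (hzero : ∀ x ∈ unitSq, ∀ y ∈ unitSq, (h x y = 0 ↔ x = y))
    (α : ℝ) (hα : 0 < α) (hα1 : α ≤ 1) (M : ℕ) (hM : 1 ≤ M) :
    ∃ D : ℝ, 0 < D ∧ ∃ n0 : ℕ, ∀ n : ℕ, n0 ≤ n →
      (∫ ω, Jmax h α X M n ω / (n : ℝ) ^ ((M : ℝ) * (1 - α / 2)) ∂P)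
          ≤ D / (n : ℝ) ^ (1 - α / 2)
        ∧ (∫ ω, (Jmax h α X M n ω / (n : ℝ) ^ ((M : ℝ) * (1 - α / 2))) ^ 2 ∂P)
          ≤ D / (n : ℝ) ^ (2 - α) := by
  classical
  obtain ⟨M0, rfl⟩ : ∃ M0, M = M0 + 1 := ⟨M - 1, by omega⟩
  have hc2 : 0 < c2 := lt_of_lt_of_le hc1 hc12
  have hnn : ∀ x ∈ unitSq, ∀ y ∈ unitSq, 0 ≤ h x y := by
    intro x hx y hy
    have := (hbound x hx y hy).1
    have h2 : (0:ℝ) ≤ c1 * dist x y := by positivity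
    linarith
  have hbound2 : ∀ x ∈ unitSq, ∀ y ∈ unitSq, h x y ≤ c2 * dist x y :=
    fun x hx y hy => (hbound x hx y hy).2
  set C : ℝ := 2 * c2 ^ α * 12 ^ α with hC
  have hCpos : 0 < C := by
    have h1 : (0:ℝ) < c2 ^ α := Real.rpow_pos_of_pos hc2 _
    have h2 : (0:ℝ) < (12:ℝ) ^ α := Real.rpow_pos_of_pos (by norm_num) _
    positivity
  set A : ℝ := (((M0+1) * 2^M0 : ℕ) : ℝ) with hA
  have hApos : 0 < A := by
    rw [hA]
    have h9 : 0 < (M0+1) * 2^M0 := by positivity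
    exact_mod_cast h9
  set C2 : ℝ := C * A ^ (1 - α/2) with hC2
  have hC2pos : 0 < C2 := by
    have := Real.rpow_pos_of_pos hApos (1 - α/2)
    positivity
  refine ⟨max C2 (C2^2), lt_max_of_lt_left hC2pos, 1, ?_⟩
  intro n hn
  set M := M0 + 1 with hMdef
  have hnR : (1:ℝ) ≤ (n:ℝ) := by exact_mod_cast hn
  have hnpos : (0:ℝ) < (n:ℝ) := by linarith
  set c : ℝ := (n:ℝ) ^ ((M:ℝ) * (1 - α/2)) with hc
  have hcpos : 0 < c := Real.rpow_pos_of_pos hnpos _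
  set m : ℕ := n ^ M with hmdef
  have hm1 : 1 ≤ m := Nat.one_le_pow _ _ (by omega)
  set Q : ℕ := (M0+1) * (2^M0 * n^M0) with hQ
  set Bn : ℝ := C * ((Q : ℕ) : ℝ) ^ (1 - α/2) with hBn
  have hBn0 : 0 ≤ Bn := by
    have : (0:ℝ) ≤ ((Q:ℕ):ℝ) := Nat.cast_nonneg _
    have := Real.rpow_nonneg this (1 - α/2)
    positivity
  -- pointwise bound on the good event
  have hgood : ∀ ω, (∀ i : ℕ, X i ω ∈ unitSq) →
      0 ≤ Jmax h α X M n ω ∧ Jmax h α X M n ω ≤ Bn := by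
    intro ω hω
    set Xω : ℕ → EucPlane := fun i => X i ω with hXω
    have hkey : ∀ k ∈ Finset.Ico (n^M) ((n+1)^M),
        |tspRV h α X k ω - tspRV h α X (n^M) ω| ≤ Bn := by
      intro k hk
      rw [Finset.mem_Ico] at hk
      have hrw1 : tspRV h α X k ω = tspN h α Xω k := rfl
      have hrw2 : tspRV h α X (n^M) ω = tspN h α Xω m := rfl
      have hlow : tspN h α Xω m ≤ tspN h α Xω k :=
        tspN_mono h hα hα1 hnn htriangle Xω hω hm1 hk.1
      have hup : tspN h α Xω k ≤ tspN h α Xω m + C * (((k - m : ℕ) : ℝ)) ^ (1 - α/2) :=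
        main_upper h hα hα1 hnn hsymm htriangle hc2 hbound2 Xω hω hm1 hk.1
      have hgap : k - m ≤ Q := by
        have h3 : m = n^(M0+1) := by rw [hmdef, hMdef]
        have h4 : k < (n+1)^(M0+1) := by
          have := hk.2
          rwa [hMdef] at this
        have h2 := pow_gap_le M0 n hn
        show k - m ≤ (M0+1) * (2^M0 * n^M0)
        omega
      have hgapR : (((k - m : ℕ)) : ℝ) ^ (1 - α/2) ≤ ((Q:ℕ):ℝ) ^ (1 - α/2) :=
        Real.rpow_le_rpow (Nat.cast_nonneg _) (Nat.cast_le.mpr hgap) (by linarith)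
      rw [hrw1, hrw2, abs_of_nonneg (by linarith)]
      have := mul_le_mul_of_nonneg_left hgapR hCpos.le
      linarith
    have hall : ∀ k : ℕ, (⨆ _ : k ∈ Finset.Ico (n^M) ((n+1)^M),
        |tspRV h α X k ω - tspRV h α X (n^M) ω|) ≤ Bn := by
      intro k
      by_cases hk : k ∈ Finset.Ico (n^M) ((n+1)^M)
      · haveI : Nonempty (k ∈ Finset.Ico (n^M) ((n+1)^M)) := ⟨hk⟩
        rw [ciSup_const]
        exact hkey k hk
      · haveI : IsEmpty (k ∈ Finset.Ico (n^M) ((n+1)^M)) := ⟨fun hmem => hk hmem⟩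
        rw [Real.iSup_of_isEmpty]
        exact hBn0
    constructor
    · -- nonnegativity
      have hmem : n^M ∈ Finset.Ico (n^M) ((n+1)^M) := by
        rw [Finset.mem_Ico]
        exact ⟨le_rfl, Nat.pow_lt_pow_left (by omega) (by omega)⟩
      have hbdd : BddAbove (Set.range fun k => ⨆ _ : k ∈ Finset.Ico (n^M) ((n+1)^M),
          |tspRV h α X k ω - tspRV h α X (n^M) ω|) := by
        refine ⟨Bn, ?_⟩
        rintro x ⟨k, rfl⟩
        exact hall k
      have h0 : (0:ℝ) = ⨆ _ : n^M ∈ Finset.Ico (n^M) ((n+1)^M),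
          |tspRV h α X (n^M) ω - tspRV h α X (n^M) ω| := by
        haveI : Nonempty (n^M ∈ Finset.Ico (n^M) ((n+1)^M)) := ⟨hmem⟩
        rw [ciSup_const, sub_self, abs_zero]
      unfold Jmax
      rw [h0]
      exact le_ciSup hbdd (n^M)
    · unfold Jmax
      exact ciSup_le hall
  have haeA := ae_mem_unitSq P f X hXmeas hlaw
  -- integral bounds
  have hint1 : (∫ ω, Jmax h α X M n ω / c ∂P) ≤ Bn / c := by
    apply integral_le_of_ae_bound P _ _ (by positivity)
    refine haeA.mono fun ω hω => ?_
    obtain ⟨h1, h2⟩ := hgood ω hω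
    exact ⟨div_nonneg h1 hcpos.le, div_le_div_of_nonneg_right h2 hcpos.le⟩
  have hint2 : (∫ ω, (Jmax h α X M n ω / c) ^ 2 ∂P) ≤ (Bn / c) ^ 2 := by
    apply integral_le_of_ae_bound P _ _ (by positivity)
    refine haeA.mono fun ω hω => ?_
    obtain ⟨h1, h2⟩ := hgood ω hω
    have h3 : Jmax h α X M n ω / c ≤ Bn / c := div_le_div_of_nonneg_right h2 hcpos.le
    have h4 : 0 ≤ Jmax h α X M n ω / c := div_nonneg h1 hcpos.le
    exact ⟨sq_nonneg _, pow_le_pow_left₀ h4 h3 2⟩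
  -- numeric simplification of Bn / c
  have hBc : Bn / c = C2 * (n:ℝ) ^ (-(1 - α/2)) := by
    have hQcast : ((Q:ℕ):ℝ) = A * ((n:ℝ) ^ (M0:ℕ)) := by
      rw [hQ, hA, hMdef]
      push_cast
      ring
    have hnm0 : ((n:ℝ) ^ (M0:ℕ)) = (n:ℝ) ^ ((M0:ℕ):ℝ) := (Real.rpow_natCast _ _).symm
    have e1 : Bn = C2 * (n:ℝ) ^ (((M0:ℕ):ℝ) * (1 - α/2)) := by
      rw [hBn, hQcast, Real.mul_rpow hApos.le (by positivity), hnm0,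
        ← Real.rpow_mul hnpos.le, hC2]
      ring
    rw [e1, hc, div_eq_mul_inv, mul_assoc, ← Real.rpow_neg hnpos.le,
      ← Real.rpow_add hnpos]
    congr 2
    have : ((M:ℕ):ℝ) = ((M0:ℕ):ℝ) + 1 := by
      rw [hMdef]; push_cast; ring
    rw [this]
    ring
  constructor
  · refine hint1.trans ?_
    rw [hBc, Real.rpow_neg hnpos.le, ← div_eq_mul_inv]
    exact div_le_div_of_nonneg_right (le_max_left _ _) (Real.rpow_nonneg hnpos.le _)
  · refine hint2.trans ?_
    have hsq2 : (Bn / c) ^ 2 = C2 ^ 2 * (n:ℝ) ^ (-(2 - α)) := by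
      rw [hBc, pow_two, mul_mul_mul_comm, ← Real.rpow_add hnpos, ← pow_two]
      congr 2
      ring
    rw [hsq2, Real.rpow_neg hnpos.le, ← div_eq_mul_inv]
    exact div_le_div_of_nonneg_right (le_max_right _ _) (Real.rpow_nonneg hnpos.le _)

end
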